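/- Let f_G : ℝ³ → ℝ be the Gyroid function f_G(x, y, z) = cos(2πx)·sin(2πy) + cos(2πy)·sin(2πz) + cos(2πz)·sin(2πx), let Y = [0,1]³, and define ϱ(α) = vol({ y ∈ Y : |f_G(y)| ≤ α }) for α ≥ 0. Then ϱ is strictly increasing on the interval [0, 3/2]; in particular, ϱ is a bijection from [0, 3/2] onto [ϱ(0), 1] and admits an inverse map ϱ^{-1} from volume fractions to thickness parameters. -/

import Mathlib

open MeasureTheory

/-- The Gyroid function
`f_G(x, y, z) = cos(2πx) sin(2πy) + cos(2πy) sin(2πz) + cos(2πz) sin(2πx)`. -/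
noncomputable def gyroid (p : Fin 3 → ℝ) : ℝ :=
  Real.cos (2 * Real.pi * p 0) * Real.sin (2 * Real.pi * p 1) +
  Real.cos (2 * Real.pi * p 1) * Real.sin (2 * Real.pi * p 2) +
  Real.cos (2 * Real.pi * p 2) * Real.sin (2 * Real.pi * p 0)

/-- The unit periodicity cell `Y = [0,1]³`. -/
noncomputable def unitCell : Set (Fin 3 → ℝ) := Set.Icc 0 1

/-- The volume fraction `ϱ(α) = vol({ y ∈ Y : |f_G(y)| ≤ α })` of the Gyroid scaffold of
thickness parameter `α`. -/
noncomputable def scaffoldVolume (α : ℝ) : ℝ :=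
  (volume {y : Fin 3 → ℝ | y ∈ unitCell ∧ |gyroid y| ≤ α}).toReal

open Real Set Filter

lemma continuous_gyroid : Continuous gyroid := by
  unfold gyroid; fun_prop

/-- Solutions of `A cos x + B sin x = C` with `A ≠ 0` form a countable set. -/
lemma countable_trig (A B C : ℝ) (hA : A ≠ 0) :
    {x : ℝ | A * Real.cos x + B * Real.sin x = C}.Countable := by
  set z : ℂ := ⟨A, B⟩ with hz
  have hz0 : z ≠ 0 := by
    intro h
    apply hA
    have := congrArg Complex.re h
    simpa using this
  set R : ℝ := ‖z‖ with hR
  have hRpos : 0 < R := norm_pos_iff.mpr hz0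
  have hcos : Real.cos (Complex.arg z) = A / R := Complex.cos_arg hz0
  have hsin : Real.sin (Complex.arg z) = B / R := by
    rw [Complex.sin_arg]
  set φ := Complex.arg z
  have key : ∀ x, A * Real.cos x + B * Real.sin x = R * Real.cos (x - φ) := by
    intro x
    rw [Real.cos_sub, hcos, hsin]
    field_simp
  by_cases hC : |C / R| ≤ 1
  · have h1 : -1 ≤ C / R := (abs_le.1 hC).1
    have h2 : C / R ≤ 1 := (abs_le.1 hC).2
    set u := Real.arccos (C / R) with hu
    have hcu : Real.cos u = C / R := Real.cos_arccos h1 h2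
    have hsub : {x : ℝ | A * Real.cos x + B * Real.sin x = C} ⊆
        Set.range (fun k : ℤ => 2 * (k : ℝ) * Real.pi + u + φ) ∪
        Set.range (fun k : ℤ => 2 * (k : ℝ) * Real.pi - u + φ) := by
      intro x hx
      have hx' : Real.cos u = Real.cos (x - φ) := by
        rw [hcu]
        have := key x
        rw [Set.mem_setOf_eq] at hx
        rw [hx] at this
        field_simp at this ⊢
        linarith
      rcases Real.cos_eq_cos_iff.1 hx' with ⟨k, hk | hk⟩
      · refine Or.inl ⟨k, ?_⟩
        show 2 * (k : ℝ) * Real.pi + u + φ = x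
        linarith
      · refine Or.inr ⟨k, ?_⟩
        show 2 * (k : ℝ) * Real.pi - u + φ = x
        linarith
    exact Set.Countable.mono hsub ((Set.countable_range _).union (Set.countable_range _))
  · have : {x : ℝ | A * Real.cos x + B * Real.sin x = C} = ∅ := by
      ext x
      simp only [Set.mem_setOf_eq, Set.mem_empty_iff_false, iff_false]
      intro hx
      apply hC
      rw [key x] at hx
      have : Real.cos (x - φ) = C / R := by field_simp at hx ⊢; linarith
      rw [← this]
      exact Real.abs_cos_le_one _
    rw [this]; exact Set.countable_empty

lemma countable_sin_zero : {t : ℝ | Real.sin (2 * Real.pi * t) = 0}.Countable := by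
  have h : {t : ℝ | Real.sin (2 * Real.pi * t) = 0} ⊆
      Set.range (fun n : ℤ => (n : ℝ) / 2) := by
    intro t ht
    rw [Set.mem_setOf_eq, Real.sin_eq_zero_iff] at ht
    obtain ⟨n, hn⟩ := ht
    refine ⟨n, ?_⟩
    have hπ : (0:ℝ) < Real.pi := Real.pi_pos
    field_simp
    nlinarith [hn]
  exact Set.Countable.mono h (Set.countable_range _)

lemma gyroid_level_null (c : ℝ) : volume {p : Fin 3 → ℝ | gyroid p = c} = 0 := by
  set L := {p : Fin 3 → ℝ | gyroid p = c} with hLdef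
  have hLm : MeasurableSet L := continuous_gyroid.measurable (measurableSet_singleton c)
  set e := MeasurableEquiv.piFinSuccAbove (fun _ : Fin 3 => ℝ) 0 with he
  have hp := (volume_preserving_piFinSuccAbove (fun _ : Fin 3 => ℝ) 0).symm
  have hkey : volume (e.symm ⁻¹' L) = volume L :=
    hp.measure_preimage hLm.nullMeasurableSet
  rw [← hkey]
  set S := e.symm ⁻¹' L with hSdef
  have hSm : MeasurableSet S := e.symm.measurable hLm
  have hformula : ∀ (x : ℝ) (q : Fin 2 → ℝ), ((x, q) ∈ S ↔
      Real.sin (2 * Real.pi * q 0) * Real.cos (2 * Real.pi * x) +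
      Real.cos (2 * Real.pi * q 1) * Real.sin (2 * Real.pi * x) =
      c - Real.cos (2 * Real.pi * q 0) * Real.sin (2 * Real.pi * q 1)) := by
    intro x q
    have h2 : (Fin.cons x q : Fin 3 → ℝ) 2 = q 1 := rfl
    simp only [hSdef, Set.mem_preimage, hLdef, Set.mem_setOf_eq]
    rw [show e.symm (x, q) = Fin.cons x q by
      simp [he, MeasurableEquiv.piFinSuccAbove, Fin.insertNthEquiv]]
    unfold gyroid
    rw [h2, show (Fin.cons x q : Fin 3 → ℝ) 0 = x from rfl,
      show (Fin.cons x q : Fin 3 → ℝ) 1 = q 0 from rfl]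
    constructor <;> intro h <;> linarith
  -- pass to the swapped product
  rw [show (volume : Measure (ℝ × (Fin 2 → ℝ))) = Measure.prod volume volume from rfl]
  rw [← MeasureTheory.Measure.prod_swap, Measure.map_apply measurable_swap hSm]
  rw [Measure.measure_prod_null (measurable_swap hSm)]
  have hae : ∀ᵐ q : (Fin 2 → ℝ) ∂volume, Real.sin (2 * Real.pi * q 0) ≠ 0 := by
    rw [ae_iff]
    have heq : {q : Fin 2 → ℝ | ¬ Real.sin (2 * Real.pi * q 0) ≠ 0} =
        ⋃ t ∈ {t : ℝ | Real.sin (2 * Real.pi * t) = 0}, {q : Fin 2 → ℝ | q 0 = t} := by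
      ext q
      simp only [Set.mem_setOf_eq, not_not, Set.mem_iUnion]
      exact ⟨fun h => ⟨q 0, h, rfl⟩, fun ⟨t, ht, hq⟩ => by rw [hq]; exact ht⟩
    rw [heq, measure_biUnion_null_iff countable_sin_zero]
    intro t _
    rw [MeasureTheory.volume_pi]
    exact Measure.pi_hyperplane (μ := fun _ : Fin 2 => (volume : Measure ℝ)) 0 t
  filter_upwards [hae] with q hq
  have hslice : (Prod.mk q ⁻¹' (Prod.swap ⁻¹' S)) =
      (fun x : ℝ => 2 * Real.pi * x) ⁻¹'
        {u : ℝ | Real.sin (2 * Real.pi * q 0) * Real.cos u +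
          Real.cos (2 * Real.pi * q 1) * Real.sin u =
          c - Real.cos (2 * Real.pi * q 0) * Real.sin (2 * Real.pi * q 1)} := by
    ext x
    simp only [Set.mem_preimage, Prod.swap_prod_mk, Set.mem_setOf_eq]
    exact hformula x q
  show volume (Prod.mk q ⁻¹' (Prod.swap ⁻¹' S)) = 0
  rw [hslice]
  apply Set.Countable.measure_zero
  apply Set.Countable.preimage
  · exact countable_trig _ _ _ hq
  · intro a b hab
    have h2π : (2 * Real.pi) ≠ 0 := by positivity
    exact mul_left_cancel₀ h2π hab

/-- The gyroid is bounded by 3/2 in absolute value. -/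
lemma abs_gyroid_le (p : Fin 3 → ℝ) : |gyroid p| ≤ 3 / 2 := by
  have h0 := Real.sin_sq_add_cos_sq (2 * Real.pi * p 0)
  have h1 := Real.sin_sq_add_cos_sq (2 * Real.pi * p 1)
  have h2 := Real.sin_sq_add_cos_sq (2 * Real.pi * p 2)
  unfold gyroid
  rw [abs_le]
  constructor
  · nlinarith [sq_nonneg (Real.cos (2 * Real.pi * p 0) + Real.sin (2 * Real.pi * p 1)),
      sq_nonneg (Real.cos (2 * Real.pi * p 1) + Real.sin (2 * Real.pi * p 2)),
      sq_nonneg (Real.cos (2 * Real.pi * p 2) + Real.sin (2 * Real.pi * p 0))]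
  · nlinarith [sq_nonneg (Real.cos (2 * Real.pi * p 0) - Real.sin (2 * Real.pi * p 1)),
      sq_nonneg (Real.cos (2 * Real.pi * p 1) - Real.sin (2 * Real.pi * p 2)),
      sq_nonneg (Real.cos (2 * Real.pi * p 2) - Real.sin (2 * Real.pi * p 0))]

/-- The scaffold set of thickness `α`. -/
def gset (α : ℝ) : Set (Fin 3 → ℝ) := {y | y ∈ unitCell ∧ |gyroid y| ≤ α}

lemma scaffoldVolume_eq (α : ℝ) : scaffoldVolume α = (volume (gset α)).toReal := rfl

lemma measurableSet_gset (α : ℝ) : MeasurableSet (gset α) := by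
  have : gset α = unitCell ∩ (fun y => |gyroid y|) ⁻¹' (Set.Iic α) := by
    ext y; simp [gset, Set.mem_Iic]
  rw [this]
  exact (measurableSet_Icc).inter
    ((continuous_gyroid.abs.measurable) measurableSet_Iic)

lemma gset_subset (α : ℝ) : gset α ⊆ Set.Icc 0 1 := fun y hy => hy.1

lemma volume_unitIcc : volume (Set.Icc (0 : Fin 3 → ℝ) 1) = 1 := by
  rw [Real.volume_Icc_pi]
  simp

lemma volume_gset_le (α : ℝ) : volume (gset α) ≤ 1 := by
  rw [← volume_unitIcc]
  exact measure_mono (gset_subset α)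

lemma volume_gset_ne_top (α : ℝ) : volume (gset α) ≠ ⊤ :=
  (lt_of_le_of_lt (volume_gset_le α) ENNReal.one_lt_top).ne

lemma gset_mono {α β : ℝ} (h : α ≤ β) : gset α ⊆ gset β :=
  fun y hy => ⟨hy.1, hy.2.trans h⟩

lemma scaffoldVolume_mono : Monotone scaffoldVolume := by
  intro α β h
  rw [scaffoldVolume_eq, scaffoldVolume_eq]
  exact ENNReal.toReal_mono (volume_gset_ne_top β) (measure_mono (gset_mono h))

lemma gset_top : gset (3 / 2) = Set.Icc 0 1 := by
  ext y
  exact ⟨fun hy => hy.1, fun hy => ⟨hy, abs_gyroid_le y⟩⟩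

lemma scaffoldVolume_top : scaffoldVolume (3 / 2) = 1 := by
  rw [scaffoldVolume_eq, gset_top, volume_unitIcc, ENNReal.toReal_one]

/-- Diagonal IVT: gyroid takes every value in `(0, 3/2)` inside the open cube. -/
lemma exists_gyroid_eq {γ : ℝ} (h1 : 0 < γ) (h2 : γ < 3 / 2) :
    ∃ t ∈ Set.Ioo (0 : ℝ) 1, gyroid (fun _ => t) = γ := by
  set φ : ℝ → ℝ := fun t => gyroid (fun _ => t) with hφ
  have hφc : ContinuousOn φ (Set.Icc 0 (1/8)) :=
    (continuous_gyroid.comp (by fun_prop)).continuousOn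
  have hφ0 : φ 0 = 0 := by simp [hφ, gyroid]
  have hφ8 : φ (1/8) = 3 / 2 := by
    have hs : Real.sqrt 2 * Real.sqrt 2 = 2 := Real.mul_self_sqrt (by norm_num)
    have harg : 2 * Real.pi * (1/8 : ℝ) = Real.pi / 4 := by ring
    simp only [hφ, gyroid, harg, Real.cos_pi_div_four, Real.sin_pi_div_four]
    nlinarith
  have hmem : γ ∈ Set.Icc (φ 0) (φ (1/8)) := by
    rw [hφ0, hφ8]; exact ⟨h1.le, h2.le⟩
  obtain ⟨t, ht, hφt⟩ := intermediate_value_Icc (by norm_num : (0:ℝ) ≤ 1/8) hφc hmem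
  refine ⟨t, ⟨?_, ?_⟩, hφt⟩
  · rcases lt_or_eq_of_le ht.1 with h | h
    · exact h
    · exfalso; rw [← h, hφ0] at hφt; linarith
  · linarith [ht.2]

lemma scaffoldVolume_strictMonoOn : StrictMonoOn scaffoldVolume (Set.Icc 0 (3 / 2)) := by
  rintro α ⟨hα0, -⟩ β ⟨-, hβ2⟩ hαβ
  set γ := (α + β) / 2 with hγ
  have hγ1 : α < γ := by rw [hγ]; linarith
  have hγ2 : γ < β := by rw [hγ]; linarith
  set U : Set (Fin 3 → ℝ) :=
    {p | (∀ i, p i ∈ Set.Ioo (0:ℝ) 1) ∧ α < |gyroid p| ∧ |gyroid p| < β} with hU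
  have hUopen : IsOpen U := by
    have e1 : U = (Set.pi Set.univ fun _ : Fin 3 => Set.Ioo (0:ℝ) 1) ∩
        ((fun p => |gyroid p|) ⁻¹' Set.Ioi α ∩ (fun p => |gyroid p|) ⁻¹' Set.Iio β) := by
      ext p
      simp [hU, Set.mem_pi, and_assoc]
    rw [e1]
    exact (isOpen_set_pi Set.finite_univ (fun i _ => isOpen_Ioo)).inter
      ((continuous_gyroid.abs.isOpen_preimage _ isOpen_Ioi).inter
        (continuous_gyroid.abs.isOpen_preimage _ isOpen_Iio))
  have hUne : U.Nonempty := by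
    obtain ⟨t, ht, hgt⟩ := exists_gyroid_eq (by linarith : 0 < γ)
      (by linarith : γ < 3/2)
    refine ⟨fun _ => t, fun i => ht, ?_, ?_⟩
    · rw [hgt, abs_of_pos (by linarith)]; exact hγ1
    · rw [hgt, abs_of_pos (by linarith)]; exact hγ2
  have hUsub : U ⊆ gset β := by
    rintro p ⟨hp, -, hpβ⟩
    refine ⟨?_, hpβ.le⟩
    rw [unitCell, Set.mem_Icc]
    exact ⟨fun i => (hp i).1.le, fun i => (hp i).2.le⟩
  have hdisj : Disjoint (gset α) U := by
    rw [Set.disjoint_left]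
    rintro p ⟨-, hpα⟩ ⟨-, hpα', -⟩
    exact absurd hpα (not_le.2 hpα')
  have hvolU : 0 < volume U := hUopen.measure_pos volume hUne
  have hle : volume (gset α) + volume U ≤ volume (gset β) := by
    rw [← measure_union hdisj hUopen.measurableSet]
    exact measure_mono (Set.union_subset (gset_mono hαβ.le) hUsub)
  have hlt : volume (gset α) < volume (gset β) :=
    lt_of_lt_of_le (ENNReal.lt_add_right (volume_gset_ne_top α) hvolU.ne') hle
  rw [scaffoldVolume_eq, scaffoldVolume_eq]
  exact ENNReal.toReal_strict_mono (volume_gset_ne_top β) hlt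

lemma scaffoldVolume_continuous : Continuous scaffoldVolume := by
  rw [continuous_iff_continuousAt]
  intro α
  rw [Metric.continuousAt_iff]
  intro ε hε
  set s : ℕ → Set (Fin 3 → ℝ) := fun n =>
    {y | y ∈ unitCell ∧ α - 1/(n+1) < |gyroid y| ∧ |gyroid y| ≤ α + 1/(n+1)} with hs
  have hsm : ∀ n, MeasurableSet (s n) := by
    intro n
    have : s n = gset (α + 1/(n+1)) \ gset (α - 1/(n+1)) := by
      ext y
      simp only [hs, Set.mem_setOf_eq, gset, Set.mem_diff, not_and, not_le]
      constructor
      · rintro ⟨h1, h2, h3⟩; exact ⟨⟨h1, h3⟩, fun _ => h2⟩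
      · rintro ⟨⟨h1, h3⟩, h2⟩; exact ⟨h1, h2 h1, h3⟩
    rw [this]
    exact (measurableSet_gset _).diff (measurableSet_gset _)
  have hanti : Antitone s := by
    intro n m hnm y hy
    have hd : 1/((m:ℝ)+1) ≤ 1/((n:ℝ)+1) := by
      apply one_div_le_one_div_of_le (by positivity)
      exact_mod_cast by omega
    exact ⟨hy.1, lt_of_le_of_lt (by linarith) hy.2.1, hy.2.2.trans (by linarith)⟩
  have hfin : ∃ n, volume (s n) ≠ ⊤ := by
    refine ⟨0, ?_⟩
    have : s 0 ⊆ Set.Icc 0 1 := fun y hy => hy.1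
    exact ((measure_mono this).trans_lt (by rw [volume_unitIcc]; exact ENNReal.one_lt_top)).ne
  have hint : volume (⋂ n, s n) = 0 := by
    apply measure_mono_null
      (t := {p : Fin 3 → ℝ | gyroid p = α} ∪ {p : Fin 3 → ℝ | gyroid p = -α})
    · intro y hy
      simp only [Set.mem_iInter] at hy
      have hge : α ≤ |gyroid y| := by
        by_contra h
        push_neg at h
        obtain ⟨n, hn⟩ := exists_nat_one_div_lt (by linarith : 0 < α - |gyroid y|)
        exact absurd (hy n).2.1 (by push_cast; linarith)
      have hle : |gyroid y| ≤ α := by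
        by_contra h
        push_neg at h
        obtain ⟨n, hn⟩ := exists_nat_one_div_lt (by linarith : 0 < |gyroid y| - α)
        exact absurd (hy n).2.2 (by push_cast at hn ⊢; linarith)
      have : |gyroid y| = α := le_antisymm hle hge
      rcases abs_eq (le_trans (abs_nonneg _) this.le) |>.1 this with h | h
      · exact Or.inl h
      · exact Or.inr h
    · exact measure_union_null (gyroid_level_null α) (gyroid_level_null (-α))
  have htend := tendsto_measure_iInter_atTop
    (fun n => (hsm n).nullMeasurableSet) hanti hfin
  rw [hint] at htend
  have hev : ∀ᶠ n in Filter.atTop, volume (s n) < ENNReal.ofReal ε :=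
    htend.eventually_lt_const (by simpa using hε)
  obtain ⟨n, hn⟩ := hev.exists
  set δ : ℝ := 1/((n:ℝ)+1) with hδ
  have hδpos : 0 < δ := by positivity
  refine ⟨δ, hδpos, fun {β} hβ => ?_⟩
  rw [Real.dist_eq] at hβ
  have hβ1 : β ≤ α + δ := by cases abs_lt.1 hβ; linarith
  have hβ2 : α - δ ≤ β := by cases abs_lt.1 hβ; linarith
  -- decompose
  have hsplit : gset (α + δ) = gset (α - δ) ∪ s n := by
    ext y
    simp only [gset, Set.mem_setOf_eq, Set.mem_union, hs]
    constructor
    · rintro ⟨h1, h2⟩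
      rcases le_or_gt (|gyroid y|) (α - δ) with h | h
      · exact Or.inl ⟨h1, h⟩
      · exact Or.inr ⟨h1, h, h2⟩
    · rintro (⟨h1, h2⟩ | ⟨h1, h2, h3⟩)
      · exact ⟨h1, by linarith⟩
      · exact ⟨h1, h3⟩
  have hdisj : Disjoint (gset (α - δ)) (s n) := by
    rw [Set.disjoint_left]
    rintro y ⟨-, h2⟩ ⟨-, h3, -⟩
    exact absurd h2 (not_le.2 h3)
  have hkey : scaffoldVolume (α + δ) = scaffoldVolume (α - δ) + (volume (s n)).toReal := by
    rw [scaffoldVolume_eq, scaffoldVolume_eq, hsplit,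
      measure_union hdisj (hsm n), ENNReal.toReal_add (volume_gset_ne_top _)]
    exact (lt_of_lt_of_le hn le_top).ne_top
  have hsn : (volume (s n)).toReal < ε := ENNReal.toReal_lt_of_lt_ofReal hn
  have m1 : scaffoldVolume (α - δ) ≤ scaffoldVolume β := scaffoldVolume_mono hβ2
  have m2 : scaffoldVolume β ≤ scaffoldVolume (α + δ) := scaffoldVolume_mono hβ1
  have m3 : scaffoldVolume (α - δ) ≤ scaffoldVolume α :=
    scaffoldVolume_mono (by linarith)
  have m4 : scaffoldVolume α ≤ scaffoldVolume (α + δ) :=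
    scaffoldVolume_mono (by linarith)
  rw [Real.dist_eq, abs_lt]
  constructor <;> linarith

/-- **Invertibility of the thickness-to-volume map of the Gyroid scaffold.**
The map `ϱ(α) = vol({ y ∈ Y : |f_G(y)| ≤ α })` is strictly increasing on `[0, 3/2]`;
in particular it is a bijection from `[0, 3/2]` onto `[ϱ(0), 1]` and admits an inverse map
`ϱ⁻¹` from volume fractions to thickness parameters. -/
theorem scaffoldVolume_strictMono_bijective :
    StrictMonoOn scaffoldVolume (Set.Icc 0 (3 / 2)) ∧
    Set.BijOn scaffoldVolume (Set.Icc 0 (3 / 2)) (Set.Icc (scaffoldVolume 0) 1) ∧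
    ∃ ψ : ℝ → ℝ, Set.InvOn ψ scaffoldVolume (Set.Icc 0 (3 / 2))
      (Set.Icc (scaffoldVolume 0) 1) := by
  have hsm := scaffoldVolume_strictMonoOn
  have hcont : ContinuousOn scaffoldVolume (Set.Icc 0 (3/2)) :=
    scaffoldVolume_continuous.continuousOn
  have hsurj : Set.SurjOn scaffoldVolume (Set.Icc 0 (3/2))
      (Set.Icc (scaffoldVolume 0) 1) := by
    intro v hv
    have h := intermediate_value_Icc (by norm_num : (0:ℝ) ≤ 3/2) hcont
    rw [scaffoldVolume_top] at h
    exact h hv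
  have hmaps : Set.MapsTo scaffoldVolume (Set.Icc 0 (3/2))
      (Set.Icc (scaffoldVolume 0) 1) := by
    intro x hx
    refine ⟨scaffoldVolume_mono hx.1, ?_⟩
    rw [← scaffoldVolume_top]
    exact scaffoldVolume_mono hx.2
  have hinj := hsm.injOn
  exact ⟨hsm, ⟨hmaps, hinj, hsurj⟩,
    Function.invFunOn scaffoldVolume (Set.Icc 0 (3/2)),
    hinj.leftInvOn_invFunOn, hsurj.rightInvOn_invFunOn⟩
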